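/- (Proposition 1(b)) In the emissions market model, suppose (A*_t)_{t=0}^{T} is an equilibrium allowance price process with corresponding equilibrium policies (ϑ*^i, ξ*^i) for i ∈ I. Then for each agent i ∈ I and each t = 0, …, T−1, the equilibrium abatement satisfies ξ*^i_t = c^i_t(A*_t), where c^i_t(a)(ω) is the unique minimizer of x ↦ C^i_t(x)(ω) − a·x over [0, E^i_t(ω)]. -/

import Mathlib

open MeasureTheory ProbabilityTheory
open scoped ENNReal

noncomputable section

/-- Extended (`EReal`-valued) expectation of a real random variable; its value is
meaningful (in `(-∞, +∞]`) whenever the negative part is integrable. -/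
def eexp {Ω : Type*} [MeasurableSpace Ω] (P : Measure Ω) (f : Ω → ℝ) : EReal :=
  ((∫⁻ ω, ENNReal.ofReal (f ω) ∂P : ℝ≥0∞) : EReal) -
    ((∫⁻ ω, ENNReal.ofReal (-f ω) ∂P : ℝ≥0∞) : EReal)

/-- The expectation of `f` exists, with value finite or `+∞`: `f` is a.e.-measurable and
its negative part is integrable. -/
def EexpExists {Ω : Type*} [MeasurableSpace Ω] (P : Measure Ω) (f : Ω → ℝ) : Prop :=
  AEMeasurable f P ∧ ∫⁻ ω, ENNReal.ofReal (-f ω) ∂P < ⊤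

/-- Terminal wealth (revenue) of an agent with cost functions `Cf`, business-as-usual
emissions `Eb` and effective initial allocation `γ`, facing allowance prices `A` and
penalty `π`, following the trading strategy `ϑ` and the abatement strategy `ξ`:
`L^{A}(ϑ, ξ) = −Σ_{t<T} (ϑ_t A_t + C_t(ξ_t)) − ϑ_T A_T
  − π (Σ_{t<T} (E_t − ξ_t − ϑ_t) − γ − ϑ_T)⁺`. -/
def wealth {Ω : Type*} (T : ℕ) (π : ℝ) (Cf : ℕ → ℝ → Ω → ℝ) (Eb : ℕ → Ω → ℝ)
    (γ : Ω → ℝ) (A ϑ ξ : ℕ → Ω → ℝ) (ω : Ω) : ℝ :=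
  -(∑ t ∈ Finset.range T, (ϑ t ω * A t ω + Cf t (ξ t ω) ω)) - ϑ T ω * A T ω -
    π * max (∑ t ∈ Finset.range T, (Eb t ω - ξ t ω - ϑ t ω) - γ ω - ϑ T ω) 0

/-- A policy `(ϑ, ξ)` is admissible: both processes are adapted and the abatement
satisfies `0 ≤ ξ_t ≤ E_t` for `t = 0, …, T−1`. -/
def Admissible {Ω : Type*} [m0 : MeasurableSpace Ω] (ℱ : MeasureTheory.Filtration ℕ m0)
    (T : ℕ) (Eb : ℕ → Ω → ℝ) (ϑ ξ : ℕ → Ω → ℝ) : Prop :=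
  (∀ t ≤ T, StronglyMeasurable[ℱ t] (ϑ t)) ∧
  (∀ t < T, StronglyMeasurable[ℱ t] (ξ t)) ∧
  (∀ t < T, ∀ ω, 0 ≤ ξ t ω ∧ ξ t ω ≤ Eb t ω)

/-- `A` is an equilibrium allowance price process with corresponding equilibrium policies
`(ϑs i, ξs i)`, `i ∈ I`: each `(ϑs i, ξs i)` is admissible with finite equilibrium
expected utility, cumulative position changes are in zero net supply, and each agent's
policy maximizes its expected utility among admissible policies whose expected utility
exists (is finite or `+∞`). -/
def IsEquilibrium {Ω : Type*} [m0 : MeasurableSpace Ω] (P : Measure Ω)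
    (ℱ : MeasureTheory.Filtration ℕ m0) (T : ℕ) (π : ℝ) {I : Type*} [Fintype I]
    (Eb : I → ℕ → Ω → ℝ) (Cf : I → ℕ → ℝ → Ω → ℝ) (γ : I → Ω → ℝ) (U : I → ℝ → ℝ)
    (A : ℕ → Ω → ℝ) (ϑs ξs : I → ℕ → Ω → ℝ) : Prop :=
  (∀ i, Admissible ℱ T (Eb i) (ϑs i) (ξs i)) ∧
  (∀ i, Integrable
    (fun ω => U i (wealth T π (Cf i) (Eb i) (γ i) A (ϑs i) (ξs i) ω)) P) ∧
  (∀ t ≤ T, ∀ ω, ∑ i, ϑs i t ω = 0) ∧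
  (∀ i, ∀ ϑ ξ : ℕ → Ω → ℝ, Admissible ℱ T (Eb i) ϑ ξ →
    EexpExists P (fun ω => U i (wealth T π (Cf i) (Eb i) (γ i) A ϑ ξ ω)) →
    eexp P (fun ω => U i (wealth T π (Cf i) (Eb i) (γ i) A ϑ ξ ω)) ≤
      eexp P (fun ω => U i (wealth T π (Cf i) (Eb i) (γ i) A (ϑs i) (ξs i) ω)))

/-- Any two minimizers of a strictly convex function on `[0, E]` coincide. -/
lemma minimizer_unique {E : ℝ} {f : ℝ → ℝ}
    (hconv : StrictConvexOn ℝ (Set.Ici 0) f) {x y : ℝ}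
    (hx : x ∈ Set.Icc 0 E) (hy : y ∈ Set.Icc 0 E)
    (hxm : IsMinOn f (Set.Icc 0 E) x) (hym : IsMinOn f (Set.Icc 0 E) y) : x = y := by
  by_contra hne
  have hz : (1/2 : ℝ) • x + (1/2 : ℝ) • y ∈ Set.Icc 0 E :=
    (convex_Icc 0 E) hx hy (by norm_num) (by norm_num) (by norm_num)
  have hlt : f ((1/2 : ℝ) • x + (1/2 : ℝ) • y) < (1/2 : ℝ) • f x + (1/2 : ℝ) • f y :=
    hconv.2 hx.1 hy.1 hne (by norm_num) (by norm_num) (by norm_num)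
  have h1 : f x ≤ f ((1/2 : ℝ) • x + (1/2 : ℝ) • y) := isMinOn_iff.1 hxm _ hz
  have h2 : f y ≤ f ((1/2 : ℝ) • x + (1/2 : ℝ) • y) := isMinOn_iff.1 hym _ hz
  simp only [smul_eq_mul] at hlt h1 h2
  linarith

/-- A continuous function on `[0, E]` takes a value `< r` iff it does so at a clamped
rational point. -/
lemma exists_lt_iff_rat {E r : ℝ} {f : ℝ → ℝ} (hE : 0 ≤ E)
    (hcont : ContinuousOn f (Set.Icc 0 E)) :
    (∃ x ∈ Set.Icc 0 E, f x < r) ↔ ∃ p : ℚ, f (min (max (p : ℝ) 0) E) < r := by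
  have hg_mem : ∀ y : ℝ, min (max y 0) E ∈ Set.Icc 0 E := fun y =>
    ⟨le_min (le_max_right _ _) hE, min_le_right _ _⟩
  constructor
  · rintro ⟨x, hx, hfx⟩
    have hg_cont : Continuous (fun y : ℝ => min (max y 0) E) :=
      (continuous_id.max continuous_const).min continuous_const
    have hgx : min (max x 0) E = x := by
      rw [max_eq_left hx.1, min_eq_left hx.2]
    have htg : Filter.Tendsto (fun y : ℝ => min (max y 0) E) (nhds x)
        (nhdsWithin x (Set.Icc 0 E)) := by
      rw [tendsto_nhdsWithin_iff]
      exact ⟨by simpa [hgx] using hg_cont.tendsto x, Filter.Eventually.of_forall hg_mem⟩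
    have htend : Filter.Tendsto (fun y : ℝ => f (min (max y 0) E)) (nhds x) (nhds (f x)) :=
      Filter.Tendsto.comp (hcont x hx) htg
    have hnhds : {y : ℝ | f (min (max y 0) E) < r} ∈ nhds x := htend (Iio_mem_nhds hfx)
    obtain ⟨ε, hε, hsub⟩ := Metric.mem_nhds_iff.1 hnhds
    obtain ⟨p, hp1, hp2⟩ := exists_rat_btwn (show x - ε < x + ε by linarith)
    have hpball : (p : ℝ) ∈ Metric.ball x ε := by
      rw [Real.ball_eq_Ioo]; exact ⟨hp1, hp2⟩
    exact ⟨p, hsub hpball⟩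
  · rintro ⟨p, hp⟩
    exact ⟨_, hg_mem p, hp⟩

/-- Rational characterization of `c < r` for the unique minimizer `c`. -/
lemma min_lt_iff_char {E r : ℝ} {f : ℝ → ℝ} {c : ℝ} (hE : 0 ≤ E)
    (hc : c ∈ Set.Icc 0 E) (hcm : IsMinOn f (Set.Icc 0 E) c)
    (huniq : ∀ y ∈ Set.Icc 0 E, IsMinOn f (Set.Icc 0 E) y → y = c)
    (hcont : ContinuousOn f (Set.Icc 0 E)) :
    c < r ↔ ∃ q : ℚ, (0 ≤ (q : ℝ) ∧ (q : ℝ) < r) ∧ ∀ s : ℚ,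
      (¬ ∃ p : ℚ, f (min (max (p : ℝ) 0) E) < s) ∨
      ∃ p : ℚ, f (min (max (p : ℝ) 0) (min (max (q : ℝ) 0) E)) < s := by
  constructor
  · intro hr
    obtain ⟨q, hq1, hq2⟩ := exists_rat_btwn hr
    have hq0 : 0 ≤ (q : ℝ) := le_of_lt (lt_of_le_of_lt hc.1 hq1)
    refine ⟨q, ⟨hq0, hq2⟩, fun s => or_iff_not_imp_left.2 fun hns => ?_⟩
    rw [not_not] at hns
    obtain ⟨p, hp⟩ := hns
    set β : ℝ := min (max (q : ℝ) 0) E with hβ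
    have hβ0 : 0 ≤ β := le_min (le_max_right _ _) hE
    have hβE : β ≤ E := min_le_right _ _
    have hsub : Set.Icc (0:ℝ) β ⊆ Set.Icc 0 E := Set.Icc_subset_Icc le_rfl hβE
    have hcβ : c ∈ Set.Icc 0 β :=
      ⟨hc.1, le_min (le_trans (le_of_lt hq1) (le_max_left _ _)) hc.2⟩
    have hfc : f c < s := lt_of_le_of_lt
      (isMinOn_iff.1 hcm _ ⟨le_min (le_max_right _ _) hE, min_le_right _ _⟩) hp
    exact (exists_lt_iff_rat hβ0 (hcont.mono hsub)).1 ⟨c, hcβ, hfc⟩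
  · rintro ⟨q, ⟨hq0, hqr⟩, hq⟩
    set β : ℝ := min (max (q : ℝ) 0) E with hβ
    have hβ0 : 0 ≤ β := le_min (le_max_right _ _) hE
    have hβE : β ≤ E := min_le_right _ _
    have hsub : Set.Icc (0:ℝ) β ⊆ Set.Icc 0 E := Set.Icc_subset_Icc le_rfl hβE
    obtain ⟨y, hy, hym⟩ := isCompact_Icc.exists_isMinOn (Set.nonempty_Icc.2 hβ0)
      (hcont.mono hsub)
    have hyc : f y ≤ f c := by
      by_contra hcy
      push_neg at hcy
      obtain ⟨s, hs1, hs2⟩ := exists_rat_btwn hcy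
      obtain ⟨p, hp⟩ := (hq s).resolve_left
        (not_not_intro ((exists_lt_iff_rat hE hcont).1 ⟨c, hc, hs1⟩))
      have hpm : min (max (p : ℝ) 0) β ∈ Set.Icc 0 β :=
        ⟨le_min (le_max_right _ _) hβ0, min_le_right _ _⟩
      have := isMinOn_iff.1 hym _ hpm
      linarith
    have hymE : IsMinOn f (Set.Icc 0 E) y := by
      rw [isMinOn_iff]
      intro z hz
      exact le_trans hyc (isMinOn_iff.1 hcm z hz)
    have hyE : y ∈ Set.Icc 0 E := ⟨hy.1, le_trans hy.2 hβE⟩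
    have hyceq : y = c := huniq y hyE hymE
    calc c = y := hyceq.symm
      _ ≤ β := hy.2
      _ ≤ max (q : ℝ) 0 := min_le_left _ _
      _ = (q : ℝ) := max_eq_left hq0
      _ < r := hqr

/-- Composition of a jointly measurable function with a measurable selection. -/
lemma comp_meas_aux {Ω : Type*} {m1 m2 : MeasurableSpace Ω} (hle : m1 ≤ m2) {C : ℝ → Ω → ℝ}
    (hC : Measurable[(inferInstance : MeasurableSpace ℝ).prod m1] (Function.uncurry C))
    {g : Ω → ℝ} (hg : Measurable[m2] g) : Measurable[m2] (fun ω => C (g ω) ω) := by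
  have h1 : @Measurable Ω (ℝ × Ω) m2 ((inferInstance : MeasurableSpace ℝ).prod m1)
      (fun ω => (g ω, ω)) := Measurable.prodMk hg (measurable_id'' hle)
  exact hC.comp h1

/-- Measurability of the pointwise minimizer of a jointly measurable, pointwise
continuous family over the random interval `[0, E ω]`. -/
lemma measurable_argmin_aux {Ω : Type*} [mΩ : MeasurableSpace Ω]
    {F : ℝ → Ω → ℝ} (hF : Measurable (Function.uncurry F))
    {E : Ω → ℝ} (hE : Measurable E) (hE0 : ∀ ω, 0 ≤ E ω)
    (hcont : ∀ ω, ContinuousOn (fun x => F x ω) (Set.Icc 0 (E ω)))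
    {c : Ω → ℝ}
    (hc_mem : ∀ ω, c ω ∈ Set.Icc 0 (E ω))
    (hc_min : ∀ ω, IsMinOn (fun x => F x ω) (Set.Icc 0 (E ω)) (c ω))
    (huniq : ∀ ω, ∀ y ∈ Set.Icc 0 (E ω),
      IsMinOn (fun x => F x ω) (Set.Icc 0 (E ω)) y → y = c ω) :
    Measurable c := by
  apply measurable_of_Iio
  intro r
  have hiff : ∀ ω, c ω < r ↔ ∃ q : ℚ, (0 ≤ (q : ℝ) ∧ (q : ℝ) < r) ∧ ∀ s : ℚ,
      (¬ ∃ p : ℚ, F (min (max (p : ℝ) 0) (E ω)) ω < s) ∨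
      ∃ p : ℚ, F (min (max (p : ℝ) 0) (min (max (q : ℝ) 0) (E ω))) ω < s := fun ω =>
    min_lt_iff_char (hE0 ω) (hc_mem ω) (hc_min ω) (huniq ω) (hcont ω)
  have hmc : ∀ (g : Ω → ℝ), Measurable g → Measurable (fun ω => F (g ω) ω) :=
    fun g hg => comp_meas_aux le_rfl hF hg
  have hset : c ⁻¹' (Set.Iio r) = ⋃ (q : ℚ), ⋃ (_ : 0 ≤ (q : ℝ) ∧ (q : ℝ) < r), ⋂ (s : ℚ),
      ((⋃ (p : ℚ), {ω | F (min (max (p : ℝ) 0) (E ω)) ω < s})ᶜ ∪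
        ⋃ (p : ℚ), {ω | F (min (max (p : ℝ) 0) (min (max (q : ℝ) 0) (E ω))) ω < s}) := by
    ext ω
    simp only [Set.mem_preimage, Set.mem_Iio, Set.mem_iUnion, Set.mem_iInter, Set.mem_union,
      Set.mem_compl_iff, Set.mem_setOf_eq, hiff ω, exists_prop]
  rw [hset]
  refine MeasurableSet.iUnion fun q => MeasurableSet.iUnion fun _ =>
    MeasurableSet.iInter fun s => MeasurableSet.union
      (MeasurableSet.compl (MeasurableSet.iUnion fun p => ?_))
      (MeasurableSet.iUnion fun p => ?_)
  · exact (hmc _ (measurable_const.min hE)) measurableSet_Iio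
  · exact (hmc _ (measurable_const.min (measurable_const.min hE))) measurableSet_Iio

/-- Measurability of the wealth of an agent. -/
lemma wealth_measurable_aux {Ω : Type*} [mΩ : MeasurableSpace Ω] (T : ℕ) (π : ℝ)
    (Cf : ℕ → ℝ → Ω → ℝ) (Eb : ℕ → Ω → ℝ) (γ : Ω → ℝ) (A ϑ ξ : ℕ → Ω → ℝ)
    (hC : ∀ s < T, Measurable (fun ω => Cf s (ξ s ω) ω))
    (hϑ : ∀ s ≤ T, Measurable (ϑ s)) (hξ : ∀ s < T, Measurable (ξ s))
    (hEb : ∀ s < T, Measurable (Eb s)) (hA : ∀ s ≤ T, Measurable (A s))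
    (hγ : Measurable γ) :
    Measurable (wealth T π Cf Eb γ A ϑ ξ) := by
  unfold wealth
  have h1 : Measurable (fun ω => ∑ t ∈ Finset.range T, (ϑ t ω * A t ω + Cf t (ξ t ω) ω)) :=
    Finset.measurable_sum _ fun s hs =>
      ((hϑ s (Finset.mem_range.1 hs).le).mul (hA s (Finset.mem_range.1 hs).le)).add
        (hC s (Finset.mem_range.1 hs))
  have h2 : Measurable (fun ω => ∑ t ∈ Finset.range T, (Eb t ω - ξ t ω - ϑ t ω)) :=
    Finset.measurable_sum _ fun s hs =>
      ((hEb s (Finset.mem_range.1 hs)).sub (hξ s (Finset.mem_range.1 hs))).sub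
        (hϑ s (Finset.mem_range.1 hs).le)
  exact ((h1.neg.sub ((hϑ T le_rfl).mul (hA T le_rfl))).sub
    (measurable_const.mul (((h2.sub hγ).sub (hϑ T le_rfl)).max measurable_const)))

lemma lintegral_ofReal_neg_lt_top_aux {Ω : Type*} [MeasurableSpace Ω] {P : Measure Ω}
    {f : Ω → ℝ} (hf : Integrable f P) : ∫⁻ ω, ENNReal.ofReal (-f ω) ∂P < ⊤ := by
  refine lt_of_le_of_lt (lintegral_mono fun ω => ?_) hf.hasFiniteIntegral
  rw [Real.enorm_eq_ofReal_abs]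
  exact ENNReal.ofReal_le_ofReal (neg_le_abs _)

lemma coe_toReal_ennreal_aux {x : ℝ≥0∞} (hx : x ≠ ⊤) :
    ((x.toReal : ℝ) : EReal) = (x : EReal) := by
  conv_rhs => rw [← ENNReal.ofReal_toReal hx]
  rw [EReal.coe_ennreal_ofReal, max_eq_left ENNReal.toReal_nonneg]

lemma eexp_of_integrable {Ω : Type*} [MeasurableSpace Ω] {P : Measure Ω}
    {f : Ω → ℝ} (hf : Integrable f P) : eexp P f = ((∫ ω, f ω ∂P : ℝ) : EReal) := by
  have hneg : ∫⁻ ω, ENNReal.ofReal (-f ω) ∂P ≠ ⊤ := (lintegral_ofReal_neg_lt_top_aux hf).ne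
  have hpos : ∫⁻ ω, ENNReal.ofReal (f ω) ∂P ≠ ⊤ := by
    have := (lintegral_ofReal_neg_lt_top_aux hf.neg).ne
    simpa using this
  rw [integral_eq_lintegral_pos_part_sub_lintegral_neg_part hf, eexp, EReal.coe_sub,
    coe_toReal_ennreal_aux hpos, coe_toReal_ennreal_aux hneg]

lemma eexp_mono {Ω : Type*} [MeasurableSpace Ω] {P : Measure Ω}
    {f g : Ω → ℝ} (h : ∀ ω, f ω ≤ g ω) : eexp P f ≤ eexp P g := by
  refine EReal.sub_le_sub ?_ ?_
  · exact EReal.coe_ennreal_le_coe_ennreal_iff.2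
      (lintegral_mono fun ω => ENNReal.ofReal_le_ofReal (h ω))
  · exact EReal.coe_ennreal_le_coe_ennreal_iff.2
      (lintegral_mono fun ω => ENNReal.ofReal_le_ofReal (by linarith [h ω]))

/-- **Proposition 1(b).** In the emissions market model, if `(A*_t)_{t=0}^T`
is an equilibrium allowance price process with corresponding equilibrium policies
`(ϑ*^i, ξ*^i)`, then for each agent `i` and each `t = 0, …, T−1`, the equilibrium abatement
equals the abatement volume `ξ*^i_t = c^i_t(A*_t)`: almost surely, `ξ*^i_t` is the unique
minimizer of `x ↦ C^i_t(x) − A*_t · x` over `[0, E^i_t]`. -/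
theorem equilibrium_abatement_eq_abatement_volume
    {Ω : Type*} [m0 : MeasurableSpace Ω]
    (P : Measure Ω) [IsProbabilityMeasure P]
    (ℱ : MeasureTheory.Filtration ℕ m0)
    (hF0 : ∀ s : Set Ω, MeasurableSet[ℱ 0] s → P s = 0 ∨ P s = 1)
    (T : ℕ) (hT : 0 < T)
    {I : Type*} [Fintype I] [Nonempty I]
    (Eb : I → ℕ → Ω → ℝ)
    (hEb_adapted : ∀ i, ∀ t < T, StronglyMeasurable[ℱ t] (Eb i t))
    (hEb_nonneg : ∀ i t ω, 0 ≤ Eb i t ω)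
    (Cf : I → ℕ → ℝ → Ω → ℝ)
    (hC_meas : ∀ i, ∀ t < T,
      Measurable[(inferInstance : MeasurableSpace ℝ).prod (ℱ t)]
        (Function.uncurry (Cf i t)))
    (hC_conv : ∀ i ω, ∀ t < T, StrictConvexOn ℝ (Set.Ici 0) fun x => Cf i t x ω)
    (hC_cont : ∀ i ω, ∀ t < T, ContinuousOn (fun x => Cf i t x ω) (Set.Ici 0))
    (hC_zero : ∀ i ω, ∀ t < T, Cf i t 0 ω = 0)
    (γ : I → Ω → ℝ) (hγ : ∀ i, Measurable (γ i))
    (π : ℝ) (hπ : 0 < π)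
    (U : I → ℝ → ℝ)
    (hU_cont : ∀ i, Continuous (U i))
    (hU_mono : ∀ i, StrictMono (U i))
    (hU_conc : ∀ i, ConcaveOn ℝ Set.univ (U i))
    (A : ℕ → Ω → ℝ)
    (hA_adapted : ∀ t ≤ T, StronglyMeasurable[ℱ t] (A t))
    (ϑs ξs : I → ℕ → Ω → ℝ)
    (heq : IsEquilibrium P ℱ T π Eb Cf γ U A ϑs ξs) :
    ∀ i, ∀ t < T, ∀ᵐ ω ∂P,
      ξs i t ω ∈ Set.Icc 0 (Eb i t ω) ∧
      IsMinOn (fun x => Cf i t x ω - A t ω * x) (Set.Icc 0 (Eb i t ω)) (ξs i t ω) ∧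
      ∀ x ∈ Set.Icc 0 (Eb i t ω),
        IsMinOn (fun y => Cf i t y ω - A t ω * y) (Set.Icc 0 (Eb i t ω)) x →
        x = ξs i t ω := by
  obtain ⟨hadm, hint, hzero, hopt⟩ := heq
  intro i t ht
  obtain ⟨hϑm, hξm, hξbd⟩ := hadm i
  have hE0 : ∀ ω, 0 ≤ Eb i t ω := fun ω => hEb_nonneg i t ω
  -- strict convexity and continuity of `x ↦ C(x) − A x`
  have hlin : ∀ ω, ConcaveOn ℝ (Set.Ici 0) (fun x : ℝ => A t ω * x) := fun ω =>
    ⟨convex_Ici 0, fun x _ y _ a b _ _ _ => by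
      simp only [smul_eq_mul]; exact le_of_eq (by ring)⟩
  have hconv : ∀ ω, StrictConvexOn ℝ (Set.Ici 0) (fun x => Cf i t x ω - A t ω * x) :=
    fun ω => by
      have h := (hC_conv i ω t ht).sub_concaveOn (hlin ω)
      simpa [Pi.sub_def] using h
  have hcontIcc : ∀ ω, ContinuousOn (fun x => Cf i t x ω - A t ω * x)
      (Set.Icc 0 (Eb i t ω)) := fun ω =>
    ((hC_cont i ω t ht).mono Set.Icc_subset_Ici_self).sub
      ((continuous_const.mul continuous_id).continuousOn)
  -- the pointwise minimizer
  have hmin : ∀ ω, ∃ x, x ∈ Set.Icc 0 (Eb i t ω) ∧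
      IsMinOn (fun x => Cf i t x ω - A t ω * x) (Set.Icc 0 (Eb i t ω)) x := fun ω => by
    obtain ⟨x, hx, hmx⟩ := isCompact_Icc.exists_isMinOn
      (Set.nonempty_Icc.2 (hE0 ω)) (hcontIcc ω)
    exact ⟨x, hx, hmx⟩
  choose c hc_mem hc_min using hmin
  have huniq : ∀ ω, ∀ y ∈ Set.Icc 0 (Eb i t ω),
      IsMinOn (fun x => Cf i t x ω - A t ω * x) (Set.Icc 0 (Eb i t ω)) y → y = c ω :=
    fun ω y hy hmy => minimizer_unique (hconv ω) hy (hc_mem ω) hmy (hc_min ω)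
  -- measurability of the minimizer
  have hFm : Measurable[(inferInstance : MeasurableSpace ℝ).prod (ℱ t)]
      (Function.uncurry (fun x ω => Cf i t x ω - A t ω * x)) := by
    have heqF : Function.uncurry (fun x ω => Cf i t x ω - A t ω * x) =
        fun p : ℝ × Ω => Function.uncurry (Cf i t) p - A t p.2 * p.1 := rfl
    rw [heqF]
    exact (hC_meas i t ht).sub
      (((hA_adapted t ht.le).measurable.comp (@measurable_snd ℝ Ω _ (ℱ t))).mul
        (@measurable_fst ℝ Ω _ (ℱ t)))
  have hc_measF : Measurable[ℱ t] c :=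
    @measurable_argmin_aux Ω (ℱ t) _ hFm _ (hEb_adapted i t ht).measurable hE0 hcontIcc
      c hc_mem hc_min huniq
  have hc_sm : StronglyMeasurable[ℱ t] c := hc_measF.stronglyMeasurable
  have hc_meas0 : Measurable c := hc_measF.mono (ℱ.le t) le_rfl
  -- ambient measurability
  have hAm : ∀ s ≤ T, Measurable (A s) := fun s hs =>
    (hA_adapted s hs).measurable.mono (ℱ.le s) le_rfl
  have hϑm0 : ∀ s ≤ T, Measurable (ϑs i s) := fun s hs =>
    (hϑm s hs).measurable.mono (ℱ.le s) le_rfl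
  have hξm0 : ∀ s < T, Measurable (ξs i s) := fun s hs =>
    (hξm s hs).measurable.mono (ℱ.le s) le_rfl
  have hEbm0 : ∀ s < T, Measurable (Eb i s) := fun s hs =>
    (hEb_adapted i s hs).measurable.mono (ℱ.le s) le_rfl
  have hCcomp : ∀ (g : Ω → ℝ), Measurable g → ∀ s < T,
      Measurable (fun ω => Cf i s (g ω) ω) :=
    fun g hg s hs => comp_meas_aux (ℱ.le s) (hC_meas i s hs) hg
  -- the deviation policy
  set ϑ' : ℕ → Ω → ℝ :=
    Function.update (ϑs i) t (fun ω => ϑs i t ω + ξs i t ω - c ω) with hϑ'def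
  set ξ' : ℕ → Ω → ℝ := Function.update (ξs i) t c with hξ'def
  have hϑ't : ϑ' t = fun ω => ϑs i t ω + ξs i t ω - c ω := Function.update_self _ _ _
  have hξ't : ξ' t = c := Function.update_self _ _ _
  have hϑ'ne : ∀ s, s ≠ t → ϑ' s = ϑs i s := fun s hs => Function.update_of_ne hs _ _
  have hξ'ne : ∀ s, s ≠ t → ξ' s = ξs i s := fun s hs => Function.update_of_ne hs _ _
  set D : Ω → ℝ := fun ω =>
    (Cf i t (ξs i t ω) ω - A t ω * ξs i t ω) - (Cf i t (c ω) ω - A t ω * c ω) with hDdef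
  have hD0 : ∀ ω, 0 ≤ D ω := fun ω => sub_nonneg.2
    (isMinOn_iff.1 (hc_min ω) _ ⟨(hξbd t ht ω).1, (hξbd t ht ω).2⟩)
  have hDmeas : Measurable D :=
    ((hCcomp _ (hξm0 t ht) t ht).sub ((hAm t ht.le).mul (hξm0 t ht))).sub
      ((hCcomp _ hc_meas0 t ht).sub ((hAm t ht.le).mul hc_meas0))
  -- the wealth identity for the deviation
  have hLkey : ∀ ω, wealth T π (Cf i) (Eb i) (γ i) A ϑ' ξ' ω =
      wealth T π (Cf i) (Eb i) (γ i) A (ϑs i) (ξs i) ω + D ω := by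
    intro ω
    have hsum : ∑ s ∈ Finset.range T, ((ϑ' s ω * A s ω + Cf i s (ξ' s ω) ω) -
        (ϑs i s ω * A s ω + Cf i s (ξs i s ω) ω)) =
        (ϑ' t ω * A t ω + Cf i t (ξ' t ω) ω) -
        (ϑs i t ω * A t ω + Cf i t (ξs i t ω) ω) := by
      apply Finset.sum_eq_single_of_mem t (Finset.mem_range.2 ht)
      intro s _ hs
      rw [hϑ'ne s hs, hξ'ne s hs]; ring
    rw [Finset.sum_sub_distrib] at hsum
    have hpen : ∑ s ∈ Finset.range T, (Eb i s ω - ξ' s ω - ϑ' s ω) =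
        ∑ s ∈ Finset.range T, (Eb i s ω - ξs i s ω - ϑs i s ω) := by
      apply Finset.sum_congr rfl
      intro s _
      by_cases hst : s = t
      · subst hst; simp only [hϑ't, hξ't]; ring
      · rw [hϑ'ne s hst, hξ'ne s hst]
    have hTne : ϑ' T = ϑs i T := hϑ'ne T (by omega)
    have hsum' : ∑ s ∈ Finset.range T, (ϑ' s ω * A s ω + Cf i s (ξ' s ω) ω) =
        ∑ s ∈ Finset.range T, (ϑs i s ω * A s ω + Cf i s (ξs i s ω) ω) +
        ((ϑ' t ω * A t ω + Cf i t (ξ' t ω) ω) -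
          (ϑs i t ω * A t ω + Cf i t (ξs i t ω) ω)) := by linarith
    simp only [wealth, hpen, hTne, hsum']
    simp only [hϑ't, hξ't, hDdef]
    ring
  -- the a.e. minimality of the equilibrium abatement
  have hae : ∀ᵐ ω ∂P, IsMinOn (fun x => Cf i t x ω - A t ω * x)
      (Set.Icc 0 (Eb i t ω)) (ξs i t ω) := by
    rw [MeasureTheory.ae_iff]
    by_contra hcon
    have hSset : {ω | ¬ IsMinOn (fun x => Cf i t x ω - A t ω * x)
        (Set.Icc 0 (Eb i t ω)) (ξs i t ω)} = {ω | 0 < D ω} := by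
      ext ω
      simp only [Set.mem_setOf_eq, hDdef]
      constructor
      · intro hn
        rw [isMinOn_iff] at hn
        push_neg at hn
        obtain ⟨x, hx, hlt⟩ := hn
        have hcx := isMinOn_iff.1 (hc_min ω) x hx
        linarith
      · intro hpos hmin'
        have hcc := isMinOn_iff.1 hmin' _ (hc_mem ω)
        linarith
    rw [hSset] at hcon
    have hSpos : 0 < P {ω | 0 < D ω} := pos_iff_ne_zero.2 hcon
    -- admissibility of the deviation
    have hadm' : Admissible ℱ T (Eb i) ϑ' ξ' := by
      refine ⟨fun s hs => ?_, fun s hs => ?_, fun s hs ω => ?_⟩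
      · by_cases hst : s = t
        · rw [hst, hϑ't]; exact ((hϑm t ht.le).add (hξm t ht)).sub hc_sm
        · rw [hϑ'ne s hst]; exact hϑm s hs
      · by_cases hst : s = t
        · rw [hst, hξ't]; exact hc_sm
        · rw [hξ'ne s hst]; exact hξm s hs
      · by_cases hst : s = t
        · rw [hst, hξ't]; exact ⟨(hc_mem ω).1, (hc_mem ω).2⟩
        · rw [hξ'ne s hst]; exact hξbd s hs ω
    -- measurability of wealths and utilities
    have hϑ'm0 : ∀ s ≤ T, Measurable (ϑ' s) := by
      intro s hs
      by_cases hst : s = t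
      · rw [hst, hϑ't]; exact (((hϑm0 t ht.le).add (hξm0 t ht)).sub hc_meas0)
      · rw [hϑ'ne s hst]; exact hϑm0 s hs
    have hξ'm0 : ∀ s < T, Measurable (ξ' s) := by
      intro s hs
      by_cases hst : s = t
      · rw [hst, hξ't]; exact hc_meas0
      · rw [hξ'ne s hst]; exact hξm0 s hs
    have hLmeas : Measurable (wealth T π (Cf i) (Eb i) (γ i) A (ϑs i) (ξs i)) :=
      wealth_measurable_aux T π (Cf i) (Eb i) (γ i) A (ϑs i) (ξs i)
        (fun s hs => hCcomp _ (hξm0 s hs) s hs) hϑm0 hξm0 hEbm0 hAm (hγ i)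
    have hL'meas : Measurable (wealth T π (Cf i) (Eb i) (γ i) A ϑ' ξ') :=
      wealth_measurable_aux T π (Cf i) (Eb i) (γ i) A ϑ' ξ'
        (fun s hs => hCcomp _ (hξ'm0 s hs) s hs) hϑ'm0 hξ'm0 hEbm0 hAm (hγ i)
    have hg'meas : Measurable (fun ω => U i (wealth T π (Cf i) (Eb i) (γ i) A ϑ' ξ' ω)) :=
      (hU_cont i).measurable.comp hL'meas
    have hgmeas : Measurable
        (fun ω => U i (wealth T π (Cf i) (Eb i) (γ i) A (ϑs i) (ξs i) ω)) :=
      (hU_cont i).measurable.comp hLmeas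
    have hg'ge : ∀ ω, U i (wealth T π (Cf i) (Eb i) (γ i) A (ϑs i) (ξs i) ω) ≤
        U i (wealth T π (Cf i) (Eb i) (γ i) A ϑ' ξ' ω) := fun ω =>
      (hU_mono i).monotone (by rw [hLkey ω]; linarith [hD0 ω])
    have hex : EexpExists P (fun ω => U i (wealth T π (Cf i) (Eb i) (γ i) A ϑ' ξ' ω)) :=
      ⟨hg'meas.aemeasurable, lt_of_le_of_lt
        (lintegral_mono fun ω => ENNReal.ofReal_le_ofReal (by linarith [hg'ge ω]))
        (lintegral_ofReal_neg_lt_top_aux (hint i))⟩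
    have hle := hopt i ϑ' ξ' hadm' hex
    set g' : Ω → ℝ := fun ω => U i (wealth T π (Cf i) (Eb i) (γ i) A ϑ' ξ' ω) with hg'def
    set g : Ω → ℝ := fun ω => U i (wealth T π (Cf i) (Eb i) (γ i) A (ϑs i) (ξs i) ω)
      with hgdef
    set h : Ω → ℝ := fun ω => min (g' ω) (g ω + 1) with hhdef
    have hhmeas : Measurable h := hg'meas.min (hgmeas.add measurable_const)
    have hh_int : Integrable h P := by
      have hbound : Integrable (fun ω => |g ω| + 1) P := (hint i).abs.add (integrable_const 1)
      refine Integrable.mono' hbound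
        hhmeas.aestronglyMeasurable (Filter.Eventually.of_forall fun ω => ?_)
      rw [Real.norm_eq_abs, abs_le]
      constructor
      · have h1 := hg'ge ω
        have h2 := neg_abs_le (g ω)
        have h3 : g ω ≤ h ω := le_min h1 (by linarith)
        linarith
      · have h1 : h ω ≤ g ω + 1 := min_le_right _ _
        have h2 := le_abs_self (g ω)
        linarith
    have hint_diff : Integrable (fun ω => h ω - g ω) P := hh_int.sub (hint i)
    have hnonneg : (0 : Ω → ℝ) ≤ fun ω => h ω - g ω := fun ω =>
      sub_nonneg.2 (le_min (hg'ge ω) (by linarith))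
    have hdpos : 0 < ∫ ω, (h ω - g ω) ∂P := by
      refine (integral_pos_iff_support_of_nonneg hnonneg hint_diff).2 ?_
      refine lt_of_lt_of_le hSpos (measure_mono ?_)
      intro ω hω
      simp only [Set.mem_setOf_eq] at hω
      have hgg' : g ω < g' ω := (hU_mono i) (by rw [hLkey ω]; linarith)
      have hgh : g ω < h ω := lt_min hgg' (by linarith)
      simp only [Function.mem_support]
      exact (sub_pos.2 hgh).ne'
    have hIlt : ∫ ω, g ω ∂P < ∫ ω, h ω ∂P := by
      have hsub := integral_sub hh_int (hint i)
      rw [hsub] at hdpos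
      linarith
    have hchain : eexp P g < eexp P g' := by
      calc eexp P g = ((∫ ω, g ω ∂P : ℝ) : EReal) := eexp_of_integrable (hint i)
        _ < ((∫ ω, h ω ∂P : ℝ) : EReal) := EReal.coe_lt_coe_iff.2 hIlt
        _ = eexp P h := (eexp_of_integrable hh_int).symm
        _ ≤ eexp P g' := eexp_mono fun ω => min_le_left _ _
    exact absurd hle (not_le.2 hchain)
  -- conclusion
  filter_upwards [hae] with ω hminξ
  refine ⟨⟨(hξbd t ht ω).1, (hξbd t ht ω).2⟩, hminξ, fun x hx hxmin => ?_⟩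
  exact minimizer_unique (hconv ω) hx ⟨(hξbd t ht ω).1, (hξbd t ht ω).2⟩ hxmin hminξ
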